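/- Let V be a real Hilbert space with inner product a, and P₀, P₁, …, P_N orthogonal projections onto closed subspaces satisfying: (i) every v ∈ V decomposes as v = Σ_{i=0}^N vᵢ with vᵢ ∈ Vᵢ and Σᵢ a(vᵢ,vᵢ) ≤ C₀ a(v,v); (ii) for 1 ≤ i,j ≤ N, a(vᵢ,vⱼ) ≤ ℰᵢⱼ √a(vᵢ,vᵢ)√a(vⱼ,vⱼ). Then with P = Σ_{i=0}^N Pᵢ, for every e ∈ V: a(Pe, Pe) ≤ 2(‖ℰ‖₂² + 1) a(e,e). -/

import Mathlib

open RealInnerProductSpace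

/-- Spectral norm (operator 2-norm) of a real matrix. -/
noncomputable def matrixSpectralNorm {N : ℕ} (E : Matrix (Fin N) (Fin N) ℝ) : ℝ :=
  ‖(Matrix.toEuclideanCLM (𝕜 := ℝ) E : EuclideanSpace ℝ (Fin N) →L[ℝ] EuclideanSpace ℝ (Fin N))‖

/-- Quadratic form bound by the spectral norm. -/
lemma quad_form_le_spectralNorm {N : ℕ} (E : Matrix (Fin N) (Fin N) ℝ) (s : Fin N → ℝ) :
    ∑ i, ∑ j, E i j * s i * s j ≤ matrixSpectralNorm E * ∑ i, s i ^ 2 := by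
  set x : EuclideanSpace ℝ (Fin N) := (WithLp.equiv 2 (Fin N → ℝ)).symm s with hx
  have hxi : ∀ i, x i = s i := fun i => rfl
  have happly : ∀ i, (Matrix.toEuclideanCLM (𝕜 := ℝ) E x) i = ∑ j, E i j * s j := by
    intro i
    have : Matrix.toEuclideanCLM (𝕜 := ℝ) E x =
        (WithLp.equiv 2 (Fin N → ℝ)).symm (Matrix.toLin' E s) := by
      rw [hx]; rfl
    rw [this]
    simp [Matrix.toLin'_apply, Matrix.mulVec, dotProduct]
  have h1 : ∑ i, ∑ j, E i j * s i * s j = ⟪x, Matrix.toEuclideanCLM (𝕜 := ℝ) E x⟫ := by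
    rw [PiLp.inner_apply]
    refine Finset.sum_congr rfl fun i _ => ?_
    rw [happly i, hxi i, RCLike.inner_apply, starRingEnd_apply, star_trivial,
      Finset.sum_mul]
    exact Finset.sum_congr rfl fun j _ => by ring
  have h2 : ⟪x, Matrix.toEuclideanCLM (𝕜 := ℝ) E x⟫ ≤ ‖x‖ * ‖Matrix.toEuclideanCLM (𝕜 := ℝ) E x‖ :=
    real_inner_le_norm _ _
  have h3 : ‖Matrix.toEuclideanCLM (𝕜 := ℝ) E x‖ ≤ matrixSpectralNorm E * ‖x‖ :=
    (Matrix.toEuclideanCLM (𝕜 := ℝ) E).le_opNorm x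
  have h4 : ‖x‖ ^ 2 = ∑ i, s i ^ 2 := by
    rw [← real_inner_self_eq_norm_sq, PiLp.inner_apply]
    refine Finset.sum_congr rfl fun i _ => ?_
    rw [hxi i, RCLike.inner_apply, starRingEnd_apply, star_trivial]
    ring
  have hxn : (0:ℝ) ≤ ‖x‖ := norm_nonneg _
  calc ∑ i, ∑ j, E i j * s i * s j = ⟪x, Matrix.toEuclideanCLM (𝕜 := ℝ) E x⟫ := h1
    _ ≤ ‖x‖ * (matrixSpectralNorm E * ‖x‖) := h2.trans (by
        exact mul_le_mul_of_nonneg_left h3 hxn)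
    _ = matrixSpectralNorm E * ‖x‖ ^ 2 := by ring
    _ = matrixSpectralNorm E * ∑ i, s i ^ 2 := by rw [h4]

/-- Two-level additive Schwarz boundedness: with a coarse projection `P 0` and local
projections `P 1, …, P N`, `a(Pe,Pe) ≤ 2(‖ℰ‖₂² + 1) a(e,e)` for `P = Σ_{i=0}^N Pᵢ`. -/
theorem two_level_boundedness {V : Type*} [NormedAddCommGroup V] [InnerProductSpace ℝ V]
    {N : ℕ} (Vs : Fin (N + 1) → Submodule ℝ V) (hclosed : ∀ i, IsClosed (Vs i : Set V))
    (P : Fin (N + 1) → V →ₗ[ℝ] V)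
    (hPmem : ∀ i (v : V), P i v ∈ Vs i)
    (hPproj : ∀ i (v : V), ∀ w ∈ Vs i, ⟪P i v, w⟫ = ⟪v, w⟫)
    (C₀ : ℝ) (hC₀ : 0 < C₀)
    (hdecomp : ∀ v : V, ∃ vi : Fin (N + 1) → V, (∀ i, vi i ∈ Vs i) ∧ v = ∑ i, vi i ∧
      ∑ i, ⟪vi i, vi i⟫ ≤ C₀ * ⟪v, v⟫)
    (E : Matrix (Fin N) (Fin N) ℝ)
    (hE0 : ∀ i j, 0 ≤ E i j) (hE1 : ∀ i j, E i j ≤ 1)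
    (hCS : ∀ (i j : Fin N), ∀ vi ∈ Vs i.succ, ∀ vj ∈ Vs j.succ,
      ⟪vi, vj⟫ ≤ E i j * Real.sqrt ⟪vi, vi⟫ * Real.sqrt ⟪vj, vj⟫) :
    ∀ e : V, ⟪∑ i, P i e, ∑ i, P i e⟫ ≤ 2 * ((matrixSpectralNorm E) ^ 2 + 1) * ⟪e, e⟫ := by
  intro e
  set Q : V := ∑ i : Fin N, P i.succ e with hQ
  have hsplit : (∑ i, P i e) = P 0 e + Q := by
    rw [Fin.sum_univ_succ]
  -- each P i is idempotent in norm: ⟪P i e, P i e⟫ = ⟪e, P i e⟫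
  have hself : ∀ i, ⟪P i e, P i e⟫ = ⟪e, P i e⟫ :=
    fun i => hPproj i e (P i e) (hPmem i e)
  -- bound for coarse projection
  have hP0 : ‖P 0 e‖ ≤ ‖e‖ := by
    rcases eq_or_lt_of_le (norm_nonneg (P 0 e)) with h0 | h0
    · rw [← h0]; exact norm_nonneg e
    · have : ‖P 0 e‖ ^ 2 ≤ ‖e‖ * ‖P 0 e‖ := by
        rw [← real_inner_self_eq_norm_sq, hself 0]
        exact real_inner_le_norm _ _
      nlinarith
  -- strengthened CS bound
  set s : Fin N → ℝ := fun i => ‖P i.succ e‖ with hs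
  have hsqrt : ∀ i : Fin N, Real.sqrt ⟪P i.succ e, P i.succ e⟫ = s i := by
    intro i
    rw [real_inner_self_eq_norm_sq, Real.sqrt_sq (norm_nonneg _)]
  have hQQ : ⟪Q, Q⟫ ≤ ∑ i, ∑ j, E i j * s i * s j := by
    rw [hQ, sum_inner]
    refine Finset.sum_le_sum fun i _ => ?_
    rw [inner_sum]
    refine Finset.sum_le_sum fun j _ => ?_
    have := hCS i j (P i.succ e) (hPmem i.succ e) (P j.succ e) (hPmem j.succ e)
    rwa [hsqrt i, hsqrt j] at this
  have hquad := quad_form_le_spectralNorm E s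
  have hsum : ∑ i, s i ^ 2 = ⟪e, Q⟫ := by
    rw [hQ, inner_sum]
    refine Finset.sum_congr rfl fun i _ => ?_
    rw [← hself i.succ, real_inner_self_eq_norm_sq]
  have hspec : (0:ℝ) ≤ matrixSpectralNorm E := norm_nonneg _
  have heQ : ⟪e, Q⟫ ≤ ‖e‖ * ‖Q‖ := real_inner_le_norm _ _
  have hQbound : ‖Q‖ ^ 2 ≤ matrixSpectralNorm E * (‖e‖ * ‖Q‖) := by
    rw [← real_inner_self_eq_norm_sq]
    calc ⟪Q, Q⟫ ≤ ∑ i, ∑ j, E i j * s i * s j := hQQ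
      _ ≤ matrixSpectralNorm E * ∑ i, s i ^ 2 := hquad
      _ = matrixSpectralNorm E * ⟪e, Q⟫ := by rw [hsum]
      _ ≤ matrixSpectralNorm E * (‖e‖ * ‖Q‖) := mul_le_mul_of_nonneg_left heQ hspec
  have hQ2 : ‖Q‖ ^ 2 ≤ (matrixSpectralNorm E * ‖e‖) ^ 2 := by
    nlinarith [sq_nonneg (‖Q‖ - matrixSpectralNorm E * ‖e‖), norm_nonneg Q, norm_nonneg e]
  -- combine
  rw [hsplit, real_inner_self_eq_norm_sq, real_inner_self_eq_norm_sq]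
  have htri : ‖P 0 e + Q‖ ≤ ‖P 0 e‖ + ‖Q‖ := norm_add_le _ _
  nlinarith [sq_nonneg (‖P 0 e‖ - ‖Q‖), norm_nonneg (P 0 e + Q), norm_nonneg (P 0 e),
    norm_nonneg Q, norm_nonneg e, sq_nonneg (matrixSpectralNorm E * ‖e‖)]
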